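/- Under the hypotheses of the preceding statements, for real x ≠ y: 2πi (K(x,y) − K₀(x,y)) e^{V(x)} (x − y) = (−X₂₁(y), X₁₁(y), e^{a_1 y}, ..., e^{a_r y}) · (M₊(y)^{-1} M₊(x) − I_{r+2}) · (X₁₁(x), X₂₁(x), 0, ..., 0)^t, where X₁₁(z) = π_n(z) and X₂₁(z) = −2πi κ_{n-1}² π_{n-1}(z). -/

import Mathlib

open MeasureTheory Filter Matrix Asymptotics Polynomial

noncomputable section

/-- Inverse of the asymptotic diagonal matrix `diag(z^n, z^{-n+r}, z^{-1}, ..., z^{-1})`. -/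
def DinvM (n r : ℕ) (z : ℂ) : Matrix (Fin 2 ⊕ Fin r) (Fin 2 ⊕ Fin r) ℂ :=
  Matrix.diagonal (Sum.elim ![z ^ (-(n : ℤ)), z ^ ((n : ℤ) - (r : ℤ))] fun _ => z)

/-- The jump matrix `J_Z`: the identity except that its first row is
`(1, e^{-V(x)}, e^{-V(x)+a_1 x}, ..., e^{-V(x)+a_r x})`. -/
def JZmat (r : ℕ) (V : ℝ → ℝ) (a : Fin r → ℝ) (x : ℝ) :
    Matrix (Fin 2 ⊕ Fin r) (Fin 2 ⊕ Fin r) ℂ :=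
  1 + Matrix.of fun i j =>
    if i = Sum.inl 0 then
      Sum.elim ![0, Complex.exp ((-(V x) : ℝ) : ℂ)]
        (fun k => Complex.exp ((a k * x - V x : ℝ) : ℂ)) j
    else 0

/-- The column vector `x(z) = (π_n(z), −2πi κ_{n-1}² π_{n-1}(z))^t`. -/
def xcol (n : ℕ) (p : ℕ → Polynomial ℝ) (κ : ℕ → ℝ) (z : ℂ) : Fin 2 → ℂ :=
  ![Polynomial.aeval z (p n),
    -(2 * Real.pi * Complex.I) * ((κ (n - 1) : ℝ) : ℂ) ^ 2 * Polynomial.aeval z (p (n - 1))]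

/-- `M(z) = Z(z) · diag(X(z)^{-1}, I_r)`. -/
def Mfun (r : ℕ) (Z : ℂ → Matrix (Fin 2 ⊕ Fin r) (Fin 2 ⊕ Fin r) ℂ)
    (X : ℂ → Matrix (Fin 2) (Fin 2) ℂ) (z : ℂ) :
    Matrix (Fin 2 ⊕ Fin r) (Fin 2 ⊕ Fin r) ℂ :=
  Z z * Matrix.fromBlocks (X z)⁻¹ 0 0 1

/-- The Christoffel–Darboux kernel `K₀`. -/
def K0ker (n : ℕ) (V : ℝ → ℝ) (p : ℕ → Polynomial ℝ) (κ : ℕ → ℝ) (x y : ℝ) : ℝ :=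
  Real.exp (-V x) * (κ (n - 1)) ^ 2 *
    ((p n).eval x * (p (n - 1)).eval y - (p (n - 1)).eval x * (p n).eval y) / (x - y)

/-- The column vector `e₁ = (1,0,...,0)^t`. -/
def e1vec (r : ℕ) : (Fin 2 ⊕ Fin r) → ℂ := Sum.elim ![1, 0] 0

/-- The row vector `(0, 1, e^{a_1 y}, ..., e^{a_r y})`. -/
def rowvec (r : ℕ) (a : Fin r → ℝ) (y : ℝ) : (Fin 2 ⊕ Fin r) → ℂ :=
  Sum.elim ![0, 1] fun k => Complex.exp ((a k * y : ℝ) : ℂ)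

/-- The correlation kernel `K` built from the boundary values `Z₊`. -/
def Kker (r : ℕ) (V : ℝ → ℝ) (a : Fin r → ℝ)
    (Zp : ℝ → Matrix (Fin 2 ⊕ Fin r) (Fin 2 ⊕ Fin r) ℂ) (x y : ℝ) : ℂ :=
  Complex.exp ((-(V x) : ℝ) : ℂ) / (2 * Real.pi * Complex.I * ((x : ℂ) - (y : ℂ))) *
    (rowvec r a y ⬝ᵥ (((Zp y)⁻¹ * Zp x) *ᵥ e1vec r))


lemma upper_neBot (x : ℝ) : (nhdsWithin (x : ℂ) {z : ℂ | 0 < z.im}).NeBot := by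
  rw [← mem_closure_iff_nhdsWithin_neBot]
  have ht : Tendsto (fun k : ℕ => (x : ℂ) + Complex.I * ((1 / (k + 1) : ℝ) : ℂ)) atTop
      (nhds (x : ℂ)) := by
    have h2 : Tendsto (fun k : ℕ => ((1 / (k + 1) : ℝ) : ℂ)) atTop (nhds (((0:ℝ) : ℂ))) :=
      Tendsto.comp (Complex.continuous_ofReal.tendsto 0)
        tendsto_one_div_add_atTop_nhds_zero_nat
    simpa using tendsto_const_nhds.add ((tendsto_const_nhds (x := Complex.I)).mul h2)
  refine mem_closure_of_tendsto ht ?_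
  filter_upwards with k
  simp only [Set.mem_setOf_eq, Complex.add_im, Complex.ofReal_im, Complex.mul_im,
    Complex.I_re, Complex.I_im, Complex.ofReal_re, zero_add]
  positivity

lemma xcol_continuous (n : ℕ) (p : ℕ → Polynomial ℝ) (κ : ℕ → ℝ) (i : Fin 2) :
    Continuous fun z : ℂ => xcol n p κ z i := by
  fin_cases i
  · simpa [xcol] using (p n).continuous_aeval
  · simp only [xcol, Matrix.cons_val_one, Matrix.head_cons]
    exact continuous_const.mul (p (n-1)).continuous_aeval

lemma aeval_coe_complex (p : Polynomial ℝ) (t : ℝ) :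
    Polynomial.aeval (t : ℂ) p = ((p.eval t : ℝ) : ℂ) := by
  rw [← Complex.coe_algebraMap, aeval_algebraMap_apply_eq_algebraMap_eval]

lemma inv_eq_adj {A : Matrix (Fin 2) (Fin 2) ℂ} (h : A.det = 1) : A⁻¹ = A.adjugate := by
  rw [Matrix.inv_def, h]; simp

/-- Transfer of the kernel difference to the boundary values of `M`:
`2πi (K(x,y) − K₀(x,y)) e^{V(x)} (x − y)
  = (−X₂₁(y), X₁₁(y), e^{a_1 y}, ..., e^{a_r y}) (M₊(y)⁻¹ M₊(x) − I) (X₁₁(x), X₂₁(x), 0, ..., 0)^t`. -/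
theorem kernel_difference_via_M
    (n r : ℕ) (hr : 1 ≤ r) (hnr : r ≤ n)
    (V : ℝ → ℝ) (hV : Continuous V)
    (hVint : ∀ (c : ℝ) (k : ℕ), Integrable (fun x : ℝ => |x| ^ k * Real.exp (c * x - V x)))
    (p : ℕ → Polynomial ℝ)
    (hmonic : ∀ k, (p k).Monic)
    (hdeg : ∀ k, (p k).natDegree = k)
    (horth : ∀ k m, k ≠ m → ∫ x : ℝ, (p k).eval x * (p m).eval x * Real.exp (-V x) = 0)
    (κ : ℕ → ℝ) (hκpos : ∀ k, 0 < κ k)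
    (hκ : ∀ k, ∫ x : ℝ, ((p k).eval x) ^ 2 * Real.exp (-V x) = ((κ k) ^ 2)⁻¹)
    (a : Fin r → ℝ) (ha : StrictAnti a) (ha0 : ∀ j, a j ≠ 0)
    (X : ℂ → Matrix (Fin 2) (Fin 2) ℂ)
    (hXan : ∀ z : ℂ, z.im ≠ 0 → ∀ i j, AnalyticAt ℂ (fun w => X w i j) z)
    (hXcol1 : ∀ z : ℂ, z.im ≠ 0 → ∀ i, X z i 0 = xcol n p κ z i)
    (hXcol2 : ∀ z : ℂ, z.im ≠ 0 → ∀ i, X z i 1 =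
      (2 * Real.pi * Complex.I)⁻¹ *
        ∫ s : ℝ, xcol n p κ (s : ℂ) i * ((Real.exp (-V s) : ℝ) : ℂ) / ((s : ℂ) - z))
    (hXdet : ∀ z : ℂ, z.im ≠ 0 → (X z).det = 1)
    (Xp Xm : ℝ → Matrix (Fin 2) (Fin 2) ℂ)
    (hXp : ∀ x : ℝ, Tendsto X (nhdsWithin (x : ℂ) {z : ℂ | 0 < z.im}) (nhds (Xp x)))
    (hXm : ∀ x : ℝ, Tendsto X (nhdsWithin (x : ℂ) {z : ℂ | z.im < 0}) (nhds (Xm x)))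
    (hXpcont : Continuous Xp) (hXmcont : Continuous Xm)
    (hXjump : ∀ x : ℝ, Xp x = Xm x * !![1, Complex.exp ((-(V x) : ℝ) : ℂ); 0, 1])
    (hXpdet : ∀ x : ℝ, (Xp x).det = 1) (hXmdet : ∀ x : ℝ, (Xm x).det = 1)
    (Z : ℂ → Matrix (Fin 2 ⊕ Fin r) (Fin 2 ⊕ Fin r) ℂ)
    (hZan : ∀ z : ℂ, z.im ≠ 0 → ∀ i j, AnalyticAt ℂ (fun w => Z w i j) z)
    (hZunit : ∀ z : ℂ, z.im ≠ 0 → IsUnit (Z z))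
    (Zp Zm : ℝ → Matrix (Fin 2 ⊕ Fin r) (Fin 2 ⊕ Fin r) ℂ)
    (hZp : ∀ x : ℝ, Tendsto Z (nhdsWithin (x : ℂ) {z : ℂ | 0 < z.im}) (nhds (Zp x)))
    (hZm : ∀ x : ℝ, Tendsto Z (nhdsWithin (x : ℂ) {z : ℂ | z.im < 0}) (nhds (Zm x)))
    (hZpcont : Continuous Zp) (hZmcont : Continuous Zm)
    (hjump : ∀ x : ℝ, Zp x = Zm x * JZmat r V a x)
    (hasymp : ∀ i j, (fun z : ℂ => (Z z * DinvM n r z - 1) i j)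
        =O[Bornology.cobounded ℂ] fun z => ‖z‖⁻¹)
    (Mp Mm : ℝ → Matrix (Fin 2 ⊕ Fin r) (Fin 2 ⊕ Fin r) ℂ)
    (hMp : ∀ x : ℝ, Tendsto (Mfun r Z X) (nhdsWithin (x : ℂ) {z : ℂ | 0 < z.im}) (nhds (Mp x)))
    (hMm : ∀ x : ℝ, Tendsto (Mfun r Z X) (nhdsWithin (x : ℂ) {z : ℂ | z.im < 0}) (nhds (Mm x)))
    (hZpunit : ∀ x : ℝ, IsUnit (Zp x)) :
    ∀ x y : ℝ, x ≠ y →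
      2 * Real.pi * Complex.I * (Kker r V a Zp x y - (K0ker n V p κ x y : ℂ)) *
          Complex.exp ((V x : ℝ) : ℂ) * ((x : ℂ) - (y : ℂ))
        = (Sum.elim ![-(xcol n p κ (y : ℂ) 1), xcol n p κ (y : ℂ) 0]
              (fun k => Complex.exp ((a k * y : ℝ) : ℂ)))
            ⬝ᵥ ((((Mp y)⁻¹ * Mp x - 1)) *ᵥ
              (Sum.elim ![xcol n p κ (x : ℂ) 0, xcol n p κ (x : ℂ) 1] 0)) := by
  intro x y hxy
  -- boundary value of the first column of X
  have hcol : ∀ (t : ℝ) (i : Fin 2), Xp t i 0 = xcol n p κ (t : ℂ) i := by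
    intro t i
    haveI := upper_neBot t
    have hc : Continuous (fun M : Matrix (Fin 2) (Fin 2) ℂ => M i 0) :=
      (continuous_apply (0 : Fin 2)).comp (continuous_apply i)
    have h1 : Tendsto (fun z => X z i 0) (nhdsWithin (t:ℂ) {z : ℂ | 0 < z.im})
        (nhds (Xp t i 0)) := by
      simpa [Function.comp_def] using (hc.continuousAt.tendsto).comp (hXp t)
    have heq : (fun z => X z i 0)
        =ᶠ[nhdsWithin (t:ℂ) {z : ℂ | 0 < z.im}] fun z => xcol n p κ z i := by
      filter_upwards [self_mem_nhdsWithin] with z hz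
      exact hXcol1 z (ne_of_gt hz) i
    exact tendsto_nhds_unique (h1.congr' heq)
      (((xcol_continuous n p κ i).tendsto _).mono_left nhdsWithin_le_nhds)
  -- boundary value of M
  have hMeq : ∀ t : ℝ, Mp t = Zp t * Matrix.fromBlocks (Xp t)⁻¹ 0 0 1 := by
    intro t
    haveI := upper_neBot t
    have hinv : Tendsto (fun z => (X z)⁻¹) (nhdsWithin (t:ℂ) {z : ℂ | 0 < z.im})
        (nhds (Xp t)⁻¹) := by
      have hadj : Tendsto (fun z => (X z).adjugate) (nhdsWithin (t:ℂ) {z : ℂ | 0 < z.im})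
          (nhds (Xp t).adjugate) := by
        have hc : Continuous (fun A : Matrix (Fin 2) (Fin 2) ℂ => A.adjugate) :=
          continuous_id.matrix_adjugate
        simpa [Function.comp_def] using (hc.continuousAt.tendsto).comp (hXp t)
      rw [inv_eq_adj (hXpdet t)]
      refine hadj.congr' ?_
      filter_upwards [self_mem_nhdsWithin] with z hz
      exact (inv_eq_adj (hXdet z (ne_of_gt hz))).symm
    have hB : Tendsto (fun z => Matrix.fromBlocks (X z)⁻¹ (0 : Matrix (Fin 2) (Fin r) ℂ)
          (0 : Matrix (Fin r) (Fin 2) ℂ) (1 : Matrix (Fin r) (Fin r) ℂ))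
        (nhdsWithin (t:ℂ) {z : ℂ | 0 < z.im})
        (nhds (Matrix.fromBlocks (Xp t)⁻¹ 0 0 1)) := by
      have hc : Continuous (fun A : Matrix (Fin 2) (Fin 2) ℂ =>
          Matrix.fromBlocks A (0 : Matrix (Fin 2) (Fin r) ℂ)
            (0 : Matrix (Fin r) (Fin 2) ℂ) (1 : Matrix (Fin r) (Fin r) ℂ)) :=
        continuous_id.matrix_fromBlocks continuous_const continuous_const continuous_const
      simpa [Function.comp_def] using (hc.continuousAt.tendsto).comp hinv
    exact tendsto_nhds_unique (hMp t) ((hZp t).mul hB)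
  have hdet : ∀ t : ℝ, IsUnit (Xp t).det := fun t => by rw [hXpdet t]; exact isUnit_one
  have hFH : ∀ t : ℝ, Matrix.fromBlocks (Xp t) (0 : Matrix (Fin 2) (Fin r) ℂ)
      (0 : Matrix (Fin r) (Fin 2) ℂ) (1 : Matrix (Fin r) (Fin r) ℂ) *
      Matrix.fromBlocks (Xp t)⁻¹ 0 0 1 = 1 := by
    intro t
    rw [Matrix.fromBlocks_multiply]
    simp [Matrix.mul_nonsing_inv _ (hdet t), ← Matrix.fromBlocks_one]
  have hHF : ∀ t : ℝ, Matrix.fromBlocks (Xp t)⁻¹ (0 : Matrix (Fin 2) (Fin r) ℂ)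
      (0 : Matrix (Fin r) (Fin 2) ℂ) (1 : Matrix (Fin r) (Fin r) ℂ) *
      Matrix.fromBlocks (Xp t) 0 0 1 = 1 := by
    intro t
    rw [Matrix.fromBlocks_multiply]
    simp [Matrix.nonsing_inv_mul _ (hdet t), ← Matrix.fromBlocks_one]
  have hMpinv : (Mp y)⁻¹ =
      Matrix.fromBlocks (Xp y) (0 : Matrix (Fin 2) (Fin r) ℂ)
        (0 : Matrix (Fin r) (Fin 2) ℂ) (1 : Matrix (Fin r) (Fin r) ℂ) * (Zp y)⁻¹ := by
    rw [hMeq y, Matrix.mul_inv_rev, Matrix.inv_eq_left_inv (hFH y)]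
  set w : (Fin 2 ⊕ Fin r) → ℂ :=
    Sum.elim ![xcol n p κ (x : ℂ) 0, xcol n p κ (x : ℂ) 1] 0 with hwdef
  set v : (Fin 2 ⊕ Fin r) → ℂ :=
    Sum.elim ![-(xcol n p κ (y : ℂ) 1), xcol n p κ (y : ℂ) 0]
      (fun k => Complex.exp ((a k * y : ℝ) : ℂ)) with hvdef
  -- w is F_x applied to e1
  have hw : w = Matrix.fromBlocks (Xp x) (0 : Matrix (Fin 2) (Fin r) ℂ)
      (0 : Matrix (Fin r) (Fin 2) ℂ) (1 : Matrix (Fin r) (Fin r) ℂ) *ᵥ e1vec r := by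
    rw [Matrix.fromBlocks_mulVec]
    funext i
    rcases i with i | i
    · fin_cases i <;>
        simp [hwdef, e1vec, Matrix.mulVec, dotProduct, Fin.sum_univ_two,
          hcol x, Function.comp_def]
    · simp [hwdef, e1vec, Function.comp]
  have hHw : Matrix.fromBlocks (Xp x)⁻¹ (0 : Matrix (Fin 2) (Fin r) ℂ)
      (0 : Matrix (Fin r) (Fin 2) ℂ) (1 : Matrix (Fin r) (Fin r) ℂ) *ᵥ w = e1vec r := by
    rw [hw, Matrix.mulVec_mulVec, hHF x, Matrix.one_mulVec]
  -- v times F_y is the row vector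
  have hvF : v ᵥ* Matrix.fromBlocks (Xp y) (0 : Matrix (Fin 2) (Fin r) ℂ)
      (0 : Matrix (Fin r) (Fin 2) ℂ) (1 : Matrix (Fin r) (Fin r) ℂ) = rowvec r a y := by
    rw [Matrix.vecMul_fromBlocks]
    funext i
    rcases i with i | i
    · have hd := hXpdet y
      rw [Matrix.det_fin_two] at hd
      fin_cases i <;>
        simp only [hvdef, rowvec, Sum.elim_inl, Matrix.vecMul, dotProduct,
          Fin.sum_univ_two, Function.comp_def, Pi.add_apply, Matrix.zero_apply, Fin.mk_zero,
          Fin.mk_one, Matrix.cons_val_zero, Matrix.cons_val_one, Matrix.head_cons, mul_zero,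
          add_zero, zero_add, Finset.sum_const_zero, Matrix.cons_val', Matrix.empty_val',
          Matrix.cons_val_fin_one, Fin.isValue] <;>
        rw [← hcol y 0, ← hcol y 1]
      · ring
      · linear_combination hd
    · simp [hvdef, rowvec, Function.comp]
  have hS : v ⬝ᵥ (((Mp y)⁻¹ * Mp x) *ᵥ w)
      = rowvec r a y ⬝ᵥ (((Zp y)⁻¹ * Zp x) *ᵥ e1vec r) := by
    rw [hMpinv, hMeq x]
    rw [show Matrix.fromBlocks (Xp y) (0 : Matrix (Fin 2) (Fin r) ℂ)
        (0 : Matrix (Fin r) (Fin 2) ℂ) (1 : Matrix (Fin r) (Fin r) ℂ) * (Zp y)⁻¹ *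
        (Zp x * Matrix.fromBlocks (Xp x)⁻¹ 0 0 1)
      = Matrix.fromBlocks (Xp y) 0 0 1 * (((Zp y)⁻¹ * Zp x) *
          Matrix.fromBlocks (Xp x)⁻¹ 0 0 1) by
        simp only [Matrix.mul_assoc]]
    rw [← Matrix.mulVec_mulVec, ← Matrix.mulVec_mulVec, hHw,
      Matrix.dotProduct_mulVec, hvF]
  -- the dot product with the identity part
  have hT2 : v ⬝ᵥ w = 2 * Real.pi * Complex.I * ((κ (n-1) : ℝ) : ℂ)^2 *
      (((p n).eval x : ℝ) * ((p (n-1)).eval y : ℝ) -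
        ((p (n-1)).eval x : ℝ) * ((p n).eval y : ℝ) : ℝ) := by
    rw [hvdef, hwdef, sumElim_dotProduct_sumElim]
    simp only [dotProduct, Fin.sum_univ_two, xcol, Matrix.cons_val_zero,
      Matrix.cons_val_one, Matrix.head_cons, Pi.zero_apply, mul_zero,
      Finset.sum_const_zero, add_zero, aeval_coe_complex]
    push_cast
    ring
  -- nonvanishing facts
  have hxyC : ((x:ℂ) - (y:ℂ)) ≠ 0 := sub_ne_zero.mpr (by exact_mod_cast hxy)
  have h2pi : (2 * (Real.pi:ℂ) * Complex.I) ≠ 0 := by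
    simp [Real.pi_ne_zero, Complex.I_ne_zero, Complex.ofReal_ne_zero]
  have hexpx : Complex.exp ((V x : ℝ) : ℂ) ≠ 0 := Complex.exp_ne_zero _
  have hexpinv : Complex.exp ((-(V x) : ℝ) : ℂ) = (Complex.exp ((V x : ℝ) : ℂ))⁻¹ := by
    push_cast
    exact Complex.exp_neg _
  -- main computation
  rw [Matrix.sub_mulVec, dotProduct_sub, Matrix.one_mulVec, hS, hT2]
  rw [Kker, K0ker]
  have hxyR : (x : ℝ) - y ≠ 0 := sub_ne_zero.mpr hxy
  push_cast
  simp only [Complex.exp_neg]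
  field_simp

end
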